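/- Let (N,+,∘) be an R-brace. Then for each k ≥ 1: (i) N^{(k)} (defined by N^{(1)} = N, N^{(k)} = N^{(k-1)} ⋆ N) is an R-ideal of N; (ii) N^{k} (defined by N^{1} = N, N^{k} = N ⋆ N^{k-1}) is a left R-ideal of N. In particular both are R-submodules, using that r(x ⋆ y) = x ⋆ (ry). -/
import Mathlib


/-- A (left) brace structure on an abelian group `N`. -/
structure BraceStruct (N : Type*) [AddCommGroup N] where
  circ : N → N → N
  cinv : N → N
  circ_assoc : ∀ x y z, circ (circ x y) z = circ x (circ y z)
  zero_circ : ∀ x, circ 0 x = x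
  circ_zero : ∀ x, circ x 0 = x
  cinv_circ : ∀ x, circ (cinv x) x = 0
  circ_cinv : ∀ x, circ x (cinv x) = 0
  brace : ∀ x y z, circ x (y + z) = circ x y - x + circ x z

/-- The gamma function of a brace: γ_x(y) = -x + x∘y. -/
def BraceStruct.gamma {N : Type*} [AddCommGroup N] (B : BraceStruct N)
    (x y : N) : N := -x + B.circ x y

/-- A brace whose additive group is an `R`-module is an `R`-brace when every
γ_x is an `R`-module automorphism (equivalently, is `R`-linear). -/
def BraceStruct.IsRBrace (R : Type*) {N : Type*} [Ring R] [AddCommGroup N]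
    [Module R N] (B : BraceStruct N) : Prop :=
  ∀ (x : N) (r : R) (y : N), B.gamma x (r • y) = r • B.gamma x y

/-- The right series of a brace: `rightSeries B 0 = N = N^{(1)}` and
`rightSeries B k = N^{(k+1)} = N^{(k)} ⋆ N`, with x ⋆ y = γ_x(y) − y. -/
def BraceStruct.rightSeries {N : Type*} [AddCommGroup N] (B : BraceStruct N) :
    ℕ → AddSubgroup N
  | 0 => ⊤
  | k + 1 => AddSubgroup.closure
      {z | ∃ x ∈ B.rightSeries k, ∃ y : N, z = B.gamma x y - y}

/-- The left series of a brace: `leftSeries B 0 = N = N^1` and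
`leftSeries B k = N^{k+1} = N ⋆ N^k`. -/
def BraceStruct.leftSeries {N : Type*} [AddCommGroup N] (B : BraceStruct N) :
    ℕ → AddSubgroup N
  | 0 => ⊤
  | k + 1 => AddSubgroup.closure
      {z | ∃ x : N, ∃ y ∈ B.leftSeries k, z = B.gamma x y - y}

namespace BraceStruct

variable {N : Type*} [AddCommGroup N] (B : BraceStruct N)

lemma gamma_add (x y z : N) : B.gamma x (y + z) = B.gamma x y + B.gamma x z := by
  unfold gamma
  rw [B.brace]
  abel

/-- γ_x as an additive monoid hom. -/
def gammaHom (x : N) : N →+ N := AddMonoidHom.mk' (B.gamma x) (B.gamma_add x)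

lemma circ_eq (x y : N) : B.circ x y = x + B.gamma x y := by
  unfold gamma; abel

lemma gamma_comp (x y z : N) :
    B.gamma x (B.gamma y z) = B.gamma (B.circ x y) z := by
  have h1 : B.gamma x (B.gamma y z)
      = B.gamma x (-y) + B.gamma x (B.circ y z) := by
    rw [← B.gamma_add]; rfl
  have h2 : B.gamma x (-y) = -(B.gamma x y) := map_neg (B.gammaHom x) y
  rw [h1, h2]
  unfold gamma
  rw [← B.circ_assoc]
  abel

lemma gamma_zero (x : N) : B.gamma 0 x = x := by
  unfold gamma; rw [B.zero_circ]; abel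

lemma gamma_cinv_self (x : N) : B.gamma x (B.cinv x) = -x := by
  unfold gamma; rw [B.circ_cinv]; abel

/-- conjugation formula: g∘a∘g⁻¹ = γ_g(a) + γ_g(a ⋆ g⁻¹). -/
lemma conj_formula (g a : N) :
    B.circ (B.circ g a) (B.cinv g)
      = B.gamma g a + B.gamma g (B.gamma a (B.cinv g) - B.cinv g) := by
  have h1 : B.circ (B.circ g a) (B.cinv g)
      = B.circ g a + B.gamma (B.circ g a) (B.cinv g) := B.circ_eq _ _
  rw [h1, ← B.gamma_comp, B.circ_eq g a]
  have h2 : B.gamma a (B.cinv g) = (B.gamma a (B.cinv g) - B.cinv g) + B.cinv g := by abel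
  rw [h2, B.gamma_add, B.gamma_cinv_self]
  abel

lemma gamma_neg (x y : N) : B.gamma x (-y) = -(B.gamma x y) :=
  map_neg (B.gammaHom x) y

lemma gamma_conj (g x y : N) :
    B.gamma (B.circ (B.circ g x) (B.cinv g)) (B.gamma g y)
      = B.gamma g (B.gamma x y) := by
  rw [B.gamma_comp, B.circ_assoc, B.cinv_circ, B.circ_zero, B.gamma_comp]

lemma rightSeries_succ (k : ℕ) : B.rightSeries (k + 1) = AddSubgroup.closure
    {z | ∃ x ∈ B.rightSeries k, ∃ y : N, z = B.gamma x y - y} := rfl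

lemma leftSeries_succ (k : ℕ) : B.leftSeries (k + 1) = AddSubgroup.closure
    {z | ∃ x : N, ∃ y ∈ B.leftSeries k, z = B.gamma x y - y} := rfl

lemma rightSeries_antitone (k : ℕ) : B.rightSeries (k + 1) ≤ B.rightSeries k := by
  induction k with
  | zero => exact le_top
  | succ k ih =>
    rw [rightSeries_succ]
    rw [AddSubgroup.closure_le]
    rintro z ⟨x, hx, y, rfl⟩
    rw [rightSeries_succ]
    exact AddSubgroup.subset_closure ⟨x, ih hx, y, rfl⟩

/-- push an additive hom through a closure. -/
lemma hom_closure_mem {S : Set N} {T : AddSubgroup N} (f : N →+ N)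
    (h : ∀ z ∈ S, f z ∈ T) : ∀ x ∈ AddSubgroup.closure S, f x ∈ T := by
  intro x hx
  have : AddSubgroup.closure S ≤ T.comap f := (AddSubgroup.closure_le _).mpr h
  exact this hx

end BraceStruct

/-- in an R-brace, each term N^{(k)} of the right series is an
R-ideal (an R-submodule, γ(N)-invariant and normal for ∘), and each term N^k of
the left series is a left R-ideal (an R-submodule which is γ(N)-invariant). -/
theorem series_are_R_ideals
    {R N : Type*} [Ring R] [AddCommGroup N] [Module R N]
    (B : BraceStruct N) (hB : B.IsRBrace R) :
    ∀ k : ℕ,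
      ((∀ (r : R) (x : N), x ∈ B.rightSeries k → r • x ∈ B.rightSeries k) ∧
       (∀ g a : N, a ∈ B.rightSeries k → B.gamma g a ∈ B.rightSeries k) ∧
       (∀ g a : N, a ∈ B.rightSeries k →
          B.circ (B.circ g a) (B.cinv g) ∈ B.rightSeries k)) ∧
      ((∀ (r : R) (x : N), x ∈ B.leftSeries k → r • x ∈ B.leftSeries k) ∧
       (∀ g a : N, a ∈ B.leftSeries k → B.gamma g a ∈ B.leftSeries k)) := by
  intro k
  induction k with
  | zero =>
    refine ⟨⟨?_, ?_, ?_⟩, ?_, ?_⟩ <;> intros <;>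
      simp [BraceStruct.rightSeries, BraceStruct.leftSeries]
  | succ k ih =>
    obtain ⟨⟨hRmod, hRgam, hRconj⟩, hLmod, hLgam⟩ := ih
    -- right series, module closure
    have rmod : ∀ (r : R) (x : N), x ∈ B.rightSeries (k + 1) →
        r • x ∈ B.rightSeries (k + 1) := by
      intro r x hx
      rw [B.rightSeries_succ] at hx ⊢
      refine BraceStruct.hom_closure_mem (DistribMulAction.toAddMonoidHom N r) ?_ x hx
      rintro z ⟨u, hu, y, rfl⟩
      show r • (B.gamma u y - y) ∈ _
      rw [smul_sub, ← hB u r y]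
      exact AddSubgroup.subset_closure ⟨u, hu, r • y, rfl⟩
    -- right series, gamma invariance
    have rgam : ∀ g a : N, a ∈ B.rightSeries (k + 1) →
        B.gamma g a ∈ B.rightSeries (k + 1) := by
      intro g a ha
      rw [B.rightSeries_succ] at ha ⊢
      refine BraceStruct.hom_closure_mem (B.gammaHom g) ?_ a ha
      rintro z ⟨u, hu, y, rfl⟩
      have hmap : B.gammaHom g (B.gamma u y - y)
          = B.gamma (B.circ (B.circ g u) (B.cinv g)) (B.gamma g y) - B.gamma g y := by
        show B.gamma g (B.gamma u y - y) = _
        rw [sub_eq_add_neg, B.gamma_add, B.gamma_neg, ← B.gamma_conj, ← sub_eq_add_neg]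
      rw [hmap]
      exact AddSubgroup.subset_closure
        ⟨B.circ (B.circ g u) (B.cinv g), hRconj g u hu, B.gamma g y, rfl⟩
    -- right series, conjugation closure
    have rconj : ∀ g a : N, a ∈ B.rightSeries (k + 1) →
        B.circ (B.circ g a) (B.cinv g) ∈ B.rightSeries (k + 1) := by
      intro g a ha
      rw [B.conj_formula]
      have h1 : B.gamma g a ∈ B.rightSeries (k + 1) := rgam g a ha
      have h2 : B.gamma a (B.cinv g) - B.cinv g ∈ B.rightSeries (k + 1) := by
        rw [B.rightSeries_succ]
        exact AddSubgroup.subset_closure ⟨a, B.rightSeries_antitone k ha, B.cinv g, rfl⟩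
      exact AddSubgroup.add_mem _ h1 (rgam g _ h2)
    -- left series, module closure
    have lmod : ∀ (r : R) (x : N), x ∈ B.leftSeries (k + 1) →
        r • x ∈ B.leftSeries (k + 1) := by
      intro r x hx
      rw [B.leftSeries_succ] at hx ⊢
      refine BraceStruct.hom_closure_mem (DistribMulAction.toAddMonoidHom N r) ?_ x hx
      rintro z ⟨u, y, hy, rfl⟩
      show r • (B.gamma u y - y) ∈ _
      rw [smul_sub, ← hB u r y]
      exact AddSubgroup.subset_closure ⟨u, r • y, hLmod r y hy, rfl⟩
    -- left series, gamma invariance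
    have lgam : ∀ g a : N, a ∈ B.leftSeries (k + 1) →
        B.gamma g a ∈ B.leftSeries (k + 1) := by
      intro g a ha
      rw [B.leftSeries_succ] at ha ⊢
      refine BraceStruct.hom_closure_mem (B.gammaHom g) ?_ a ha
      rintro z ⟨u, y, hy, rfl⟩
      have hmap : B.gammaHom g (B.gamma u y - y)
          = B.gamma (B.circ (B.circ g u) (B.cinv g)) (B.gamma g y) - B.gamma g y := by
        show B.gamma g (B.gamma u y - y) = _
        rw [sub_eq_add_neg, B.gamma_add, B.gamma_neg, ← B.gamma_conj, ← sub_eq_add_neg]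
      rw [hmap]
      exact AddSubgroup.subset_closure
        ⟨B.circ (B.circ g u) (B.cinv g), B.gamma g y, hLgam g y hy, rfl⟩
    exact ⟨⟨rmod, rgam, rconj⟩, lmod, lgam⟩
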